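/- Let N₁, N₂ be positive integers and set u₀(z) = ln(2(N₁+N₂+1)|z|^{2N₁}/(1+|z|^{2(N₁+N₂+1)})) and v₀(z) = ln(2(N₁+N₂+1)|z|^{2N₂}/(1+|z|^{2(N₁+N₂+1)})) for z ∈ ℝ² \ {0}. Then ∫_{ℝ²} e^{u₀+v₀} dx = 4π(N₁+N₂+1). -/

import Mathlib

open MeasureTheory Real

noncomputable def u₀ (N₁ N₂ : ℕ) (z : EuclideanSpace ℝ (Fin 2)) : ℝ :=
  Real.log (2 * (N₁ + N₂ + 1) * ‖z‖ ^ (2 * N₁) / (1 + ‖z‖ ^ (2 * (N₁ + N₂ + 1))))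

noncomputable def v₀ (N₁ N₂ : ℕ) (z : EuclideanSpace ℝ (Fin 2)) : ℝ :=
  Real.log (2 * (N₁ + N₂ + 1) * ‖z‖ ^ (2 * N₂) / (1 + ‖z‖ ^ (2 * (N₁ + N₂ + 1))))

open Set Filter in
lemma aux_integral (M : ℕ) (hM : 1 ≤ M) (C : ℝ) :
    ∫ y in Ioi (0:ℝ), C ^ 2 * y ^ (2 * M - 1) / (1 + y ^ (2 * M)) ^ 2
      = C ^ 2 / (2 * M) := by
  have h2M : (2 * M : ℕ) ≠ 0 := by omega
  have hMR : (2 * (M:ℝ)) ≠ 0 := by positivity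
  set G : ℝ → ℝ := fun y => -(C ^ 2 / (2 * M)) * (1 + y ^ (2 * M))⁻¹ with hG
  have hderiv : ∀ x ∈ Ici (0:ℝ), HasDerivAt G
      (C ^ 2 * x ^ (2 * M - 1) / (1 + x ^ (2 * M)) ^ 2) x := by
    intro x hx
    have hxpos : (0:ℝ) < 1 + x ^ (2 * M) := by
      have : (0:ℝ) ≤ x ^ (2 * M) := pow_nonneg hx _
      linarith
    have h1 : HasDerivAt (fun y : ℝ => 1 + y ^ (2 * M))
        ((2 * M : ℕ) * x ^ (2 * M - 1)) x :=
      (hasDerivAt_pow (2 * M) x).const_add 1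
    have h2 := (h1.inv hxpos.ne').const_mul (-(C ^ 2 / (2 * M)))
    refine h2.congr_deriv ?_
    have : ((2 * M : ℕ) : ℝ) = 2 * (M : ℝ) := by push_cast; ring
    rw [this]
    field_simp
  have hnonneg : ∀ x ∈ Ioi (0:ℝ),
      0 ≤ C ^ 2 * x ^ (2 * M - 1) / (1 + x ^ (2 * M)) ^ 2 := by
    intro x hx
    have hx0 : (0:ℝ) < x := hx
    positivity
  have hlim : Tendsto G atTop (nhds 0) := by
    have h1 : Tendsto (fun y : ℝ => 1 + y ^ (2 * M)) atTop atTop :=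
      tendsto_atTop_add_const_left atTop 1 (tendsto_pow_atTop h2M)
    have := (tendsto_inv_atTop_zero.comp h1).const_mul (-(C ^ 2 / (2 * M)))
    simpa [hG, neg_mul] using this
  have := integral_Ioi_of_hasDerivAt_of_nonneg' hderiv hnonneg hlim
  rw [this, hG]
  simp [zero_pow h2M]

theorem stmt1 (N₁ N₂ : ℕ) (hN₁ : 1 ≤ N₁) (hN₂ : 1 ≤ N₂) :
    ∫ z in ({0}ᶜ : Set (EuclideanSpace ℝ (Fin 2))),
        Real.exp (u₀ N₁ N₂ z + v₀ N₁ N₂ z)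
      = 4 * Real.pi * (N₁ + N₂ + 1) := by
  set M : ℕ := N₁ + N₂ + 1 with hM
  set C : ℝ := 2 * ((N₁:ℝ) + N₂ + 1) with hC
  have hCM : C = 2 * (M : ℝ) := by rw [hC, hM]; push_cast; ring
  set f : ℝ → ℝ := fun r =>
    Real.exp (Real.log (C * r ^ (2 * N₁) / (1 + r ^ (2 * M))) +
      Real.log (C * r ^ (2 * N₂) / (1 + r ^ (2 * M)))) with hf
  have hfz : ∀ z : EuclideanSpace ℝ (Fin 2),
      Real.exp (u₀ N₁ N₂ z + v₀ N₁ N₂ z) = f ‖z‖ := by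
    intro z; rfl
  rw [MeasureTheory.restrict_compl_singleton]
  calc ∫ z : EuclideanSpace ℝ (Fin 2), Real.exp (u₀ N₁ N₂ z + v₀ N₁ N₂ z)
      = ∫ z : EuclideanSpace ℝ (Fin 2), f ‖z‖ := by
        exact integral_congr_ae (Filter.Eventually.of_forall hfz)
    _ = (Module.finrank ℝ (EuclideanSpace ℝ (Fin 2))) •
          (volume (Metric.ball (0 : EuclideanSpace ℝ (Fin 2)) 1)).toReal •
          ∫ y in Set.Ioi (0:ℝ), y ^ (Module.finrank ℝ (EuclideanSpace ℝ (Fin 2)) - 1) • f y :=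
        integral_fun_norm_addHaar volume f
    _ = 4 * Real.pi * (N₁ + N₂ + 1) := by
        have hdim : Module.finrank ℝ (EuclideanSpace ℝ (Fin 2)) = 2 :=
          finrank_euclideanSpace_fin
        have hvol : (volume (Metric.ball (0 : EuclideanSpace ℝ (Fin 2)) 1)).toReal
            = Real.pi := by
          rw [EuclideanSpace.volume_ball]
          have h2 : Real.Gamma (((Fintype.card (Fin 2)):ℝ) / 2 + 1) = 1 := by
            norm_num [show ((2:ℝ)/2 + 1) = 2 from by norm_num, Real.Gamma_two]
          rw [h2]
          simp [Real.sq_sqrt Real.pi_pos.le, Real.pi_nonneg]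
        rw [hdim, hvol]
        have hcong : ∫ y in Set.Ioi (0:ℝ), y ^ (2 - 1) • f y
            = ∫ y in Set.Ioi (0:ℝ), C ^ 2 * y ^ (2 * M - 1) / (1 + y ^ (2 * M)) ^ 2 := by
          refine setIntegral_congr_fun measurableSet_Ioi ?_
          intro y hy
          have hy0 : (0:ℝ) < y := hy
          have hD : (0:ℝ) < 1 + y ^ (2 * M) := by positivity
          have hA : (0:ℝ) < C * y ^ (2 * N₁) / (1 + y ^ (2 * M)) := by
            rw [hCM]; positivity
          have hB : (0:ℝ) < C * y ^ (2 * N₂) / (1 + y ^ (2 * M)) := by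
            rw [hCM]; positivity
          have hpow : y * (y ^ (2 * N₁) * y ^ (2 * N₂)) = y ^ (2 * M - 1) := by
            rw [← pow_add, ← pow_succ']
            congr 1
            omega
          simp only [hf, smul_eq_mul]
          rw [Real.exp_add, Real.exp_log hA, Real.exp_log hB, ← hpow]
          field_simp
          ring
        rw [hcong, aux_integral M (by omega) C, hCM]
        have hMpos : (0:ℝ) < (M:ℝ) := Nat.cast_pos.mpr (by omega)
        have h3 : (2 * (M:ℝ)) ^ 2 / (2 * M) = 2 * M := by
          field_simp
        rw [h3]
        simp only [nsmul_eq_mul, smul_eq_mul, Nat.cast_ofNat]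
        rw [hM]
        push_cast
        ring
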